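/- arXiv:1606.06663 — 2 statements merged into one kernel-verified Lean document; each statement's English description precedes it below -/
import Mathlib

section
/- Let G be a connected simple graph and let k ≥ 2 be a natural number. If G has a spanning k-end tree (a spanning tree with exactly k leaves) and |V(G)| > k + 1, then there exists an edge e of G such that the contraction G/e has a spanning k-end tree. -/
open scoped Classical

/-- The contraction `G/e` of a simple graph `G` along the edge `e = uv`:
the edge `e` is deleted, its end vertices `u` and `v` are identified
(the merged vertex is represented by `u`, and `v` is removed from the vertex set),
and parallel edges are deleted so that the result is again a simple graph. -/
def SimpleGraph.contract {V : Type*} (G : SimpleGraph V) (u v : V) :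
    SimpleGraph {x : V // x ≠ v} where
  Adj a b := a ≠ b ∧
    (G.Adj a.1 b.1 ∨ (a.1 = u ∧ G.Adj v b.1) ∨ (b.1 = u ∧ G.Adj v a.1))
  symm := by
    constructor
    rintro a b ⟨hne, h | ⟨h1, h2⟩ | ⟨h1, h2⟩⟩
    · exact ⟨hne.symm, Or.inl h.symm⟩
    · exact ⟨hne.symm, Or.inr (Or.inr ⟨h1, h2⟩)⟩
    · exact ⟨hne.symm, Or.inr (Or.inl ⟨h1, h2⟩)⟩
  loopless := by constructor; rintro a ⟨hne, -⟩; exact hne rfl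

/-- The number of leaves (vertices of degree one) of a graph. -/
noncomputable def SimpleGraph.leafCount {V : Type*} [Fintype V] (T : SimpleGraph V) : ℕ :=
  {x : V | T.degree x = 1}.ncard

/-- `G` has a spanning `k`-end tree: a spanning tree with exactly `k` leaves. -/
def SimpleGraph.HasSpanningEndTree {V : Type*} [Fintype V] (G : SimpleGraph V) (k : ℕ) : Prop :=
  ∃ T : SimpleGraph V, T ≤ G ∧ T.IsTree ∧ T.leafCount = k

section MyHelpers

lemma my_reachable_transfer {V W : Type*} {G : SimpleGraph V} {H : SimpleGraph W} (f : V → W)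
    (h : ∀ x y, G.Adj x y → H.Reachable (f x) (f y)) {a b : V} (r : G.Reachable a b) :
    H.Reachable (f a) (f b) := by
  obtain ⟨p⟩ := r
  induction p with
  | nil => exact SimpleGraph.Reachable.refl _
  | cons h' p ih => exact (h _ _ h').trans ih

lemma my_no_triangle {V : Type*} {T : SimpleGraph V} (hT : T.IsAcyclic) {u v w : V}
    (huv : T.Adj u v) (hvw : T.Adj v w) (huw : T.Adj u w) : False := by
  have hc : (SimpleGraph.Walk.cons huv (SimpleGraph.Walk.cons hvw
      (SimpleGraph.Walk.cons huw.symm SimpleGraph.Walk.nil))).IsCycle := by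
    simp [SimpleGraph.Walk.isCycle_def, SimpleGraph.Walk.isTrail_def, huv.ne, hvw.ne, huw.ne,
      huv.ne', hvw.ne', huw.ne', Sym2.eq_iff]
  exact hT _ hc

lemma my_exists_spanning_tree {V : Type*} [Fintype V] (G : SimpleGraph V) (hG : G.Connected) :
    ∃ T : SimpleGraph V, T ≤ G ∧ T.IsTree := by
  classical
  suffices H : ∀ n (G : SimpleGraph V), G.Connected → G.edgeSet.ncard = n →
      ∃ T : SimpleGraph V, T ≤ G ∧ T.IsTree by
    exact H _ G hG rfl
  intro n
  induction n using Nat.strong_induction_on with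
  | _ n ih =>
    intro G hG hn
    by_cases hac : G.IsAcyclic
    · exact ⟨G, le_refl G, ⟨hG, hac⟩⟩
    · rw [SimpleGraph.IsAcyclic] at hac
      push_neg at hac
      obtain ⟨v, c, hc⟩ := hac
      cases c with
      | nil => simp [SimpleGraph.Walk.isCycle_def] at hc
      | @cons _ x _ h' p =>
        have hmem : s(v, x) ∈ (SimpleGraph.Walk.cons h' p).edges := by
          simp
        have hnb : ¬ G.IsBridge s(v, x) := by
          rw [SimpleGraph.isBridge_iff_adj_and_forall_cycle_notMem]
          push_neg
          exact ⟨v, _, hc, hmem⟩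
          exact h'
        have hreach : (G \ SimpleGraph.fromEdgeSet {s(v, x)}).Reachable v x := by
          rw [SimpleGraph.isBridge_iff] at hnb
          push_neg at hnb
          exact hnb
        set G' := G \ SimpleGraph.fromEdgeSet {s(v, x)} with hG'
        have hle : G' ≤ G := sdiff_le
        have hadjreach : ∀ a b, G.Adj a b → G'.Reachable a b := by
          intro a b hab
          by_cases he : s(a, b) = s(v, x)
          · rw [Sym2.eq_iff] at he
            rcases he with ⟨rfl, rfl⟩ | ⟨rfl, rfl⟩
            · exact hreach
            · exact hreach.symm
          · refine SimpleGraph.Adj.reachable ?_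
            rw [hG', SimpleGraph.sdiff_adj, SimpleGraph.fromEdgeSet_adj]
            exact ⟨hab, by simp [he]⟩
        have hG'conn : G'.Connected := by
          have hne : Nonempty V := hG.nonempty
          refine SimpleGraph.Connected.mk fun a b => ?_
          have := my_reachable_transfer (G := G) (H := G') id
            (fun x y hxy => hadjreach x y hxy) (hG.preconnected a b)
          simpa using this
        have hedgeset : G'.edgeSet = G.edgeSet \ {s(v, x)} := by
          simp [hG', SimpleGraph.edgeSet_sdiff, SimpleGraph.edgeSet_fromEdgeSet]
        have hcardlt : G'.edgeSet.ncard < n := by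
          rw [← hn]
          apply Set.ncard_lt_ncard
          · rw [hedgeset]
            refine ⟨Set.diff_subset, fun hsub => ?_⟩
            have := hsub (G.mem_edgeSet.2 h')
            simp at this
          · exact G.edgeSet.toFinite
        obtain ⟨T, hT1, hT2⟩ := ih _ hcardlt G' hG'conn rfl
        exact ⟨T, le_trans hT1 hle, hT2⟩

lemma my_isTree_of_card {V : Type*} [Fintype V] (G : SimpleGraph V) (hG : G.Connected)
    (h : G.edgeFinset.card + 1 = Fintype.card V) : G.IsTree := by
  obtain ⟨T, hle, htree⟩ := my_exists_spanning_tree G hG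
  have hcard := htree.card_edgeFinset
  have hsub : T.edgeFinset ⊆ G.edgeFinset := SimpleGraph.edgeFinset_subset_edgeFinset.2 hle
  have heq : T.edgeFinset = G.edgeFinset := Finset.eq_of_subset_of_card_le hsub (by omega)
  have : T = G := by rwa [SimpleGraph.edgeFinset_inj] at heq
  exact this ▸ htree

variable {V : Type*} [Fintype V] {T : SimpleGraph V} {u v : V}

lemma my_deg_ne_u (hac : T.IsAcyclic) (huv : T.Adj u v) (w : {x : V // x ≠ v})
    (hw : w.1 ≠ u) : (T.contract u v).degree w = T.degree w.1 := by
  rw [SimpleGraph.degree, SimpleGraph.degree]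
  refine (Finset.card_bij
    (fun x _ => if h : x = v then (⟨u, huv.ne⟩ : {x : V // x ≠ v}) else ⟨x, h⟩) ?_ ?_ ?_).symm
  · intro x hx
    rw [SimpleGraph.mem_neighborFinset] at hx ⊢
    by_cases h : x = v
    · simp only [dif_pos h]
      exact ⟨fun hh => hw (congrArg Subtype.val hh),
        Or.inr (Or.inr ⟨rfl, (h ▸ hx).symm⟩)⟩
    · simp only [dif_neg h]
      exact ⟨fun hh => hx.ne (congrArg Subtype.val hh), Or.inl hx⟩
  · intro a ha b hb hab
    rw [SimpleGraph.mem_neighborFinset] at ha hb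
    by_cases h1 : a = v <;> by_cases h2 : b = v
    · rw [h1, h2]
    · simp only [dif_pos h1, dif_neg h2] at hab
      have hbu : u = b := congrArg Subtype.val hab
      have hvw : T.Adj v ↑w := (h1 ▸ ha).symm
      have hb' : T.Adj (↑w) u := by rwa [← hbu] at hb
      exact (my_no_triangle hac huv hvw hb'.symm).elim
    · simp only [dif_neg h1, dif_pos h2] at hab
      have hau : a = u := congrArg Subtype.val hab
      have hvw : T.Adj v ↑w := (h2 ▸ hb).symm
      have ha' : T.Adj (↑w) u := by rwa [hau] at ha
      exact (my_no_triangle hac huv hvw ha'.symm).elim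
    · simp only [dif_neg h1, dif_neg h2] at hab
      exact congrArg Subtype.val hab
  · intro b hb
    rw [SimpleGraph.mem_neighborFinset] at hb
    obtain ⟨hne, h1 | ⟨h2a, h2b⟩ | ⟨h3a, h3b⟩⟩ := hb
    · refine ⟨b.1, ?_, ?_⟩
      · rw [SimpleGraph.mem_neighborFinset]; exact h1
      · simp only [dif_neg b.2]
    · exact absurd h2a hw
    · refine ⟨v, ?_, ?_⟩
      · rw [SimpleGraph.mem_neighborFinset]; exact h3b.symm
      · simp only [dif_pos]
        exact Subtype.ext h3a.symm

lemma my_deg_u (hac : T.IsAcyclic) (huv : T.Adj u v) :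
    (T.contract u v).degree ⟨u, huv.ne⟩ = (T.degree u - 1) + (T.degree v - 1) := by
  classical
  have hdisj : Disjoint ((T.neighborFinset u).erase v) ((T.neighborFinset v).erase u) := by
    rw [Finset.disjoint_left]
    intro x hx1 hx2
    rw [Finset.mem_erase, SimpleGraph.mem_neighborFinset] at hx1 hx2
    exact my_no_triangle hac huv hx2.2 hx1.2
  have hcard : ((T.neighborFinset u).erase v ∪ (T.neighborFinset v).erase u).card
      = (T.degree u - 1) + (T.degree v - 1) := by
    rw [Finset.card_union_of_disjoint hdisj,
      Finset.card_erase_of_mem (by rw [SimpleGraph.mem_neighborFinset]; exact huv),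
      Finset.card_erase_of_mem (by rw [SimpleGraph.mem_neighborFinset]; exact huv.symm),
      SimpleGraph.degree, SimpleGraph.degree]
  rw [← hcard, SimpleGraph.degree]
  refine (Finset.card_bij (fun x hx => (⟨x, ?_⟩ : {x : V // x ≠ v})) ?_ ?_ ?_).symm
  · rcases Finset.mem_union.1 hx with h | h
    · exact (Finset.mem_erase.1 h).1
    · exact ((SimpleGraph.mem_neighborFinset _ _ _).1 (Finset.mem_erase.1 h).2).ne'
  · intro x hx
    rw [SimpleGraph.mem_neighborFinset]
    rcases Finset.mem_union.1 hx with h | h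
    · rw [Finset.mem_erase, SimpleGraph.mem_neighborFinset] at h
      exact ⟨fun hh => h.2.ne (congrArg Subtype.val hh), Or.inl h.2⟩
    · rw [Finset.mem_erase, SimpleGraph.mem_neighborFinset] at h
      exact ⟨fun hh => h.1 (congrArg Subtype.val hh).symm, Or.inr (Or.inl ⟨rfl, h.2⟩)⟩
  · intro a _ b _ hab
    exact congrArg Subtype.val hab
  · intro b hb
    rw [SimpleGraph.mem_neighborFinset] at hb
    obtain ⟨hne, h1 | ⟨_, h2b⟩ | ⟨h3a, h3b⟩⟩ := hb
    · refine ⟨b.1, Finset.mem_union_left _ ?_, Subtype.ext rfl⟩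
      rw [Finset.mem_erase, SimpleGraph.mem_neighborFinset]
      exact ⟨b.2, h1⟩
    · refine ⟨b.1, Finset.mem_union_right _ ?_, Subtype.ext rfl⟩
      rw [Finset.mem_erase, SimpleGraph.mem_neighborFinset]
      exact ⟨fun hh => hne (Subtype.ext hh.symm), h2b⟩
    · exact absurd (Subtype.ext h3a).symm hne

omit [Fintype V] in
lemma my_contract_connected (hconn : T.Connected) (huv : T.Adj u v) :
    (T.contract u v).Connected := by
  classical
  set f : V → {x : V // x ≠ v} := fun x => if h : x = v then ⟨u, huv.ne⟩ else ⟨x, h⟩ with hf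
  have hfval : ∀ y : {x : V // x ≠ v}, f y.1 = y := by
    intro y; simp only [hf, dif_neg y.2]
  have hstep : ∀ x y, T.Adj x y → (T.contract u v).Reachable (f x) (f y) := by
    intro x y hxy
    by_cases hx : x = v <;> by_cases hy : y = v
    · exact absurd (hx.trans hy.symm) hxy.ne
    · simp only [hf, dif_pos hx, dif_neg hy]
      by_cases hyu : y = u
      · subst hyu
        exact SimpleGraph.Reachable.refl _
      · refine SimpleGraph.Adj.reachable ?_
        exact ⟨fun hh => hyu (congrArg Subtype.val hh).symm,
          Or.inr (Or.inl ⟨rfl, hx ▸ hxy⟩)⟩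
    · simp only [hf, dif_neg hx, dif_pos hy]
      by_cases hxu : x = u
      · subst hxu
        exact SimpleGraph.Reachable.refl _
      · refine SimpleGraph.Adj.reachable ?_
        exact ⟨fun hh => hxu (congrArg Subtype.val hh),
          Or.inr (Or.inr ⟨rfl, hy ▸ hxy.symm⟩)⟩
    · simp only [hf, dif_neg hx, dif_neg hy]
      exact SimpleGraph.Adj.reachable
        ⟨fun hh => hxy.ne (congrArg Subtype.val hh), Or.inl hxy⟩
  have : Nonempty {x : V // x ≠ v} := ⟨⟨u, huv.ne⟩⟩
  refine SimpleGraph.Connected.mk fun a b => ?_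
  have := my_reachable_transfer f hstep (hconn.preconnected a.1 b.1)
  rwa [hfval a, hfval b] at this

lemma my_contract_good {G : SimpleGraph V} (hTG : T ≤ G) (hTree : T.IsTree)
    (huv : T.Adj u v) (hu2 : 2 ≤ T.degree u) (hv2 : 2 ≤ T.degree v) :
    (G.contract u v).HasSpanningEndTree T.leafCount := by
  classical
  set T' := T.contract u v with hT'
  have hac := hTree.IsAcyclic
  refine ⟨T', ?_, ?_, ?_⟩
  · rintro a b ⟨hne, h1 | ⟨h2a, h2b⟩ | ⟨h3a, h3b⟩⟩
    · exact ⟨hne, Or.inl (hTG h1)⟩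
    · exact ⟨hne, Or.inr (Or.inl ⟨h2a, hTG h2b⟩)⟩
    · exact ⟨hne, Or.inr (Or.inr ⟨h3a, hTG h3b⟩)⟩
  · -- T' is a tree
    have hconn' : T'.Connected := my_contract_connected hTree.isConnected huv
    refine my_isTree_of_card T' hconn' ?_
    set u' : {x : V // x ≠ v} := ⟨u, huv.ne⟩ with hu'
    have hvalne : ∀ w : {x : V // x ≠ v}, w ∈ Finset.univ.erase u' → w.1 ≠ u := by
      intro w hw
      intro hcontra
      exact (Finset.mem_erase.1 hw).1 (Subtype.ext hcontra)
    have e1 : ∑ w : {x : V // x ≠ v}, T'.degree w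
        = T'.degree u' + ∑ w ∈ Finset.univ.erase u', T'.degree w :=
      (Finset.add_sum_erase _ _ (Finset.mem_univ u')).symm
    have e2 : ∑ w ∈ Finset.univ.erase u', T'.degree w
        = ∑ w ∈ Finset.univ.erase u', T.degree w.1 :=
      Finset.sum_congr rfl fun w hw => my_deg_ne_u hac huv w (hvalne w hw)
    have e3 : ∑ w : {x : V // x ≠ v}, T.degree w.1
        = T.degree u + ∑ w ∈ Finset.univ.erase u', T.degree w.1 :=
      (Finset.add_sum_erase _ (fun w : {x : V // x ≠ v} => T.degree w.1)
        (Finset.mem_univ u')).symm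
    have e4 : ∑ w : {x : V // x ≠ v}, T.degree w.1
        = ∑ x ∈ Finset.univ.erase v, T.degree x :=
      (Finset.sum_subtype (p := fun x : V => x ≠ v) (Finset.univ.erase v)
        (by intro x; simp [Finset.mem_erase]) (fun x => T.degree x)).symm
    have e5 : T.degree v + ∑ x ∈ Finset.univ.erase v, T.degree x = ∑ x : V, T.degree x :=
      by exact Finset.add_sum_erase Finset.univ (fun x => T.degree x) (Finset.mem_univ v)
    have e6 : ∑ x : V, T.degree x = 2 * T.edgeFinset.card :=
      T.sum_degrees_eq_twice_card_edges
    have e7 : ∑ w : {x : V // x ≠ v}, T'.degree w = 2 * T'.edgeFinset.card :=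
      T'.sum_degrees_eq_twice_card_edges
    have e8 : T'.degree u' = (T.degree u - 1) + (T.degree v - 1) := my_deg_u hac huv
    have e9 : T.edgeFinset.card + 1 = Fintype.card V := hTree.card_edgeFinset
    have e10 : Fintype.card {x : V // x ≠ v} = Fintype.card V - 1 := by
      rw [Fintype.card_subtype_compl, Fintype.card_subtype_eq]
    have e11 : 1 ≤ Fintype.card V := by
      have : Nonempty V := ⟨u⟩
      exact Fintype.card_pos
    omega
  · -- leaf count
    rw [SimpleGraph.leafCount, SimpleGraph.leafCount,
      Set.ncard_eq_toFinset_card', Set.ncard_eq_toFinset_card',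
      Set.toFinset_setOf, Set.toFinset_setOf]
    refine Finset.card_bij (fun w _ => w.1) ?_ ?_ ?_
    · intro w hw
      rw [Finset.mem_filter] at hw ⊢
      have hwu : w.1 ≠ u := by
        intro hcontra
        have : w = ⟨u, huv.ne⟩ := Subtype.ext hcontra
        rw [this, my_deg_u hac huv] at hw
        omega
      refine ⟨Finset.mem_univ _, ?_⟩
      rw [← my_deg_ne_u hac huv w hwu]
      exact hw.2
    · intro a _ b _ hab
      exact Subtype.ext hab
    · intro x hx
      rw [Finset.mem_filter] at hx
      have hxv : x ≠ v := by intro h; rw [h] at hx; omega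
      have hxu : x ≠ u := by intro h; rw [h] at hx; omega
      refine ⟨⟨x, hxv⟩, ?_, rfl⟩
      rw [Finset.mem_filter]
      exact ⟨Finset.mem_univ _, by rw [my_deg_ne_u hac huv ⟨x, hxv⟩ hxu]; exact hx.2⟩

end MyHelpers

/-- If a connected graph `G` has a spanning `k`-end tree (`k ≥ 2`) and `|V(G)| > k + 1`,
then there is an edge `e = uv` of `G` such that `G/e` has a spanning `k`-end tree. -/
theorem contraction_hasSpanningEndTree {V : Type*} [Fintype V] (G : SimpleGraph V) (k : ℕ)
    (hk : 2 ≤ k) (hconn : G.Connected) (hT : G.HasSpanningEndTree k)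
    (hcard : k + 1 < Fintype.card V) :
    ∃ u v : V, G.Adj u v ∧ (G.contract u v).HasSpanningEndTree k := by
  classical
  obtain ⟨T, hTG, hTree, hlc⟩ := hT
  have hTconn : T.Connected := hTree.isConnected
  have hdegpos : ∀ x : V, 0 < T.degree x := by
    intro x
    have hnt : Nontrivial V := Fintype.one_lt_card_iff_nontrivial.1 (by omega)
    obtain ⟨y, hy⟩ := exists_ne x
    obtain ⟨p⟩ := hTconn.preconnected x y
    cases p with
    | nil => exact absurd rfl hy
    | cons h _ => exact (T.degree_pos_iff_exists_adj x).2 ⟨_, h⟩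
  have hlcf : (Finset.univ.filter fun x : V => T.degree x = 1).card = k := by
    rw [← hlc, SimpleGraph.leafCount, Set.ncard_eq_toFinset_card', Set.toFinset_setOf]
  set I := Finset.univ.filter fun x : V => ¬ (T.degree x = 1) with hI
  have hIcard : 1 < I.card := by
    have := Finset.card_filter_add_card_filter_not
      (s := (Finset.univ : Finset V)) (p := fun x : V => T.degree x = 1)
    rw [Finset.card_univ] at this
    rw [← hI] at this
    omega
  have hdeg2 : ∀ x ∈ I, 2 ≤ T.degree x := by
    intro x hx
    rw [hI, Finset.mem_filter] at hx
    have := hdegpos x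
    omega
  obtain ⟨a, ha, b, hb, hab⟩ := Finset.one_lt_card.1 hIcard
  obtain ⟨p⟩ := hTconn.preconnected a b
  obtain ⟨q, hq⟩ : ∃ q : T.Walk a b, q.IsPath := ⟨p.toPath.1, p.toPath.2⟩
  cases q with
  | nil => exact absurd rfl hab
  | @cons _ x _ h' q' =>
    have hx2 : 2 ≤ T.degree x := by
      by_cases hxb : x = b
      · exact hdeg2 x (hxb ▸ hb)
      · cases q' with
        | nil => exact absurd rfl hxb
        | @cons _ y _ h'' q'' =>
          rw [SimpleGraph.Walk.cons_isPath_iff] at hq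
          have hy_mem : y ∈ (SimpleGraph.Walk.cons h'' q'').support := by
            rw [SimpleGraph.Walk.support_cons]
            exact List.mem_cons_of_mem _ q''.start_mem_support
          have hay : a ≠ y := fun h => hq.2 (h ▸ hy_mem)
          have hsub : ({a, y} : Finset V) ⊆ T.neighborFinset x := by
            intro z hz
            rw [Finset.mem_insert, Finset.mem_singleton] at hz
            rw [SimpleGraph.mem_neighborFinset]
            rcases hz with rfl | rfl
            · exact h'.symm
            · exact h''
          have := Finset.card_le_card hsub
          rwa [Finset.card_pair hay] at this
    refine ⟨a, x, hTG h', ?_⟩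
    rw [← hlc]
    exact my_contract_good hTG hTree h' (hdeg2 a ha) hx2
end

section
/- Let G be a simple graph with |V(G)| ≥ 3. If for every two non-adjacent vertices v and w of G we have deg(v) + deg(w) ≥ |V(G)| − 1, then G has a Hamiltonian path, i.e., a spanning tree with exactly 2 leaves. -/
open scoped Classical

open SimpleGraph

lemma crossing {V : Type*} {G : SimpleGraph V} {S : Set V} {x y : V}
    (w : G.Walk x y) (hx : x ∈ S) (hy : y ∉ S) :
    ∃ a b, G.Adj a b ∧ a ∈ S ∧ b ∉ S := by
  induction w with
  | nil => exact absurd hx hy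
  | cons h p ih =>
    rename_i u v _
    by_cases hv : _root_.id v ∈ S
    · exact ih hv hy
    · exact ⟨u, v, h, hx, hv⟩

lemma pathGraph_isAcyclic (m : ℕ) : (pathGraph m).IsAcyclic := by
  rw [isAcyclic_iff_forall_adj_isBridge]
  intro v w hvw
  -- wlog v+1 = w
  wlog hlt : (v : ℕ) + 1 = (w : ℕ) generalizing v w
  · rw [Sym2.eq_swap]
    apply this hvw.symm
    rcases (pathGraph_adj.1 hvw) with h | h
    · exact absurd h hlt
    · exact h
  rw [isBridge_iff]
  intro hreach
  obtain ⟨p⟩ := hreach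
  obtain ⟨a, b, hab, ha, hb⟩ := crossing (S := {j : Fin m | (j : ℕ) ≤ (v : ℕ)}) p (by simp)
    (by simp [Set.mem_setOf_eq]; omega)
  simp only [Set.mem_setOf_eq, not_le] at ha hb
  rw [SimpleGraph.deleteEdges, SimpleGraph.sdiff_adj, SimpleGraph.fromEdgeSet_adj] at hab
  obtain ⟨h1, h2⟩ := hab
  rcases pathGraph_adj.1 h1 with h | h
  · apply h2
    constructor
    · simp only [Set.mem_singleton_iff, Sym2.eq_iff]
      left
      exact ⟨Fin.ext (by omega), Fin.ext (by omega)⟩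
    · exact h1.ne
  · omega

lemma pathGraph_isTree (m : ℕ) (hm : 1 ≤ m) : (pathGraph m).IsTree := by
  obtain ⟨m, rfl⟩ : ∃ k, m = k + 1 := ⟨m - 1, by omega⟩
  exact ⟨pathGraph_connected m, pathGraph_isAcyclic _⟩
open SimpleGraph Finset
open scoped Classical

lemma pathGraph_degree_zero {m : ℕ} (hm : 2 ≤ m) :
    (pathGraph m).degree ⟨0, by omega⟩ = 1 := by
  rw [← card_neighborFinset_eq_degree]
  convert_to ({⟨1, by omega⟩} : Finset (Fin m)).card = 1
  · congr 1
    ext j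
    simp only [mem_neighborFinset, pathGraph_adj, mem_singleton]
    constructor
    · rintro (h | h) <;> [exact Fin.ext (by simpa using h.symm); omega]
    · rintro rfl; left; rfl
  · simp

lemma pathGraph_degree_last {m : ℕ} (hm : 2 ≤ m) :
    (pathGraph m).degree ⟨m - 1, by omega⟩ = 1 := by
  rw [← card_neighborFinset_eq_degree]
  convert_to ({⟨m - 2, by omega⟩} : Finset (Fin m)).card = 1
  · congr 1
    ext j
    simp only [mem_neighborFinset, pathGraph_adj, mem_singleton]
    constructor
    · rintro (h | h)
      · exfalso; have h' : m - 1 + 1 = (j : ℕ) := h; have := j.isLt; omega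
      · exact Fin.ext (by simp only [Fin.val_mk] at h ⊢; omega)
    · rintro rfl; right; simp only [Fin.val_mk]; omega
  · simp

lemma pathGraph_degree_mid {m : ℕ} {i : Fin m} (h0 : 0 < (i : ℕ)) (hl : (i : ℕ) < m - 1) :
    (pathGraph m).degree i = 2 := by
  rw [← card_neighborFinset_eq_degree]
  have hm : 2 ≤ m := by omega
  convert_to ({⟨(i : ℕ) - 1, by omega⟩, ⟨(i : ℕ) + 1, by omega⟩} : Finset (Fin m)).card = 2
  · congr 1
    ext j
    simp only [mem_neighborFinset, pathGraph_adj, mem_insert, mem_singleton]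
    constructor
    · rintro (h | h)
      · right; exact Fin.ext (by simpa using h.symm)
      · left; exact Fin.ext (by simp; omega)
    · rintro (rfl | rfl)
      · right; simp; omega
      · left; simp
  · rw [card_insert_of_notMem (by simp only [mem_singleton, Fin.mk.injEq]; omega), card_singleton]

lemma pathGraph_leafSet {m : ℕ} (hm : 3 ≤ m) :
    {x : Fin m | (pathGraph m).degree x = 1} =
      {⟨0, by omega⟩, ⟨m - 1, by omega⟩} := by
  ext i
  simp only [Set.mem_setOf_eq, Set.mem_insert_iff, Set.mem_singleton_iff]
  constructor
  · intro h
    by_contra hc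
    push_neg at hc
    have h0 : 0 < (i : ℕ) := by
      rcases Nat.eq_zero_or_pos (i : ℕ) |>.symm with h' | h'
      · exact h'
      · exact absurd (Fin.ext h') hc.1
    have hl : (i : ℕ) < m - 1 := by
      have := i.isLt
      rcases lt_or_eq_of_le (Nat.le_sub_one_of_lt i.isLt) with h' | h'
      · exact h'
      · exact absurd (Fin.ext h') hc.2
    rw [pathGraph_degree_mid h0 hl] at h
    omega
  · rintro (rfl | rfl)
    · exact pathGraph_degree_zero (le_trans (by norm_num) hm)
    · exact pathGraph_degree_last (by omega)

-- degree under comap of an equiv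
lemma comap_equiv_degree {V W : Type*} [Fintype V] [Fintype W] (H : SimpleGraph W)
    (e : V ≃ W) (x : V) : (H.comap e).degree x = H.degree (e x) := by
  rw [← card_neighborFinset_eq_degree, ← card_neighborFinset_eq_degree]
  apply Finset.card_bij (fun y _ => e y)
  · intro y hy
    simp only [mem_neighborFinset, comap_adj] at hy ⊢
    exact hy
  · intro y _ z _ h
    exact e.injective h
  · intro y hy
    refine ⟨e.symm y, ?_, by simp⟩
    simp only [mem_neighborFinset, comap_adj, Equiv.apply_symm_apply] at hy ⊢
    exact hy

lemma hamList_spanningEndTree {V : Type*} [Fintype V] (G : SimpleGraph V)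
    (l : List V) (hnd : l.Nodup) (hmem : ∀ x, x ∈ l) (hch : l.Chain' G.Adj)
    (hlen : 3 ≤ l.length) : G.HasSpanningEndTree 2 := by
  classical
  set m := l.length with hm
  let e : Fin m ≃ V := List.Nodup.getEquivOfForallMemList l hnd hmem
  have he : ∀ i : Fin m, e i = l.get i := fun i => rfl
  refine ⟨(pathGraph m).comap e.symm, ?_, ?_, ?_⟩
  · -- T ≤ G
    intro u v huv
    rw [comap_adj, pathGraph_adj] at huv
    have key : ∀ p q : Fin m, (p : ℕ) + 1 = (q : ℕ) → G.Adj (e p) (e q) := by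
      intro p q hpq
      have := List.isChain_iff_getElem.1 hch p (by omega)
      rw [he, he, List.get_eq_getElem, List.get_eq_getElem]
      have hq : (q : ℕ) = (p : ℕ) + 1 := hpq.symm
      simp only [hq]
      exact this
    have hu : u = e (e.symm u) := (e.apply_symm_apply u).symm
    have hv : v = e (e.symm v) := (e.apply_symm_apply v).symm
    rcases huv with h | h
    · rw [hu, hv]; exact key _ _ h
    · rw [hu, hv]; exact (key _ _ h).symm
  · -- IsTree
    have htree := pathGraph_isTree m (by omega)
    let F : pathGraph m →g (pathGraph m).comap ⇑e.symm :=
      ⟨⇑e, fun {a b} hab => by rw [comap_adj, e.symm_apply_apply, e.symm_apply_apply]; exact hab⟩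
    let F' : (pathGraph m).comap ⇑e.symm →g pathGraph m :=
      ⟨⇑e.symm, fun {a b} hab => comap_adj.mp hab⟩
    constructor
    · -- connected
      have hne : Nonempty V := ⟨e ⟨0, by omega⟩⟩
      refine Connected.mk ?_
      intro u v
      have h1 := htree.isConnected.preconnected (e.symm u) (e.symm v)
      have h2 := h1.map F
      have hu : F (e.symm u) = u := e.apply_symm_apply u
      have hv : F (e.symm v) = v := e.apply_symm_apply v
      rwa [hu, hv] at h2
    · -- acyclic
      intro v c hc
      have := hc.map (f := F') (e.symm.injective)
      exact htree.IsAcyclic _ this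
  · -- leafCount
    show Set.ncard _ = 2
    have hdeg : ∀ x : V, ((pathGraph m).comap ⇑e.symm).degree x = (pathGraph m).degree (e.symm x) :=
      fun x => comap_equiv_degree _ e.symm x
    have : {x : V | ((pathGraph m).comap ⇑e.symm).degree x = 1} =
        {e ⟨0, by omega⟩, e ⟨m - 1, by omega⟩} := by
      ext x
      simp only [Set.mem_setOf_eq, hdeg, Set.mem_insert_iff, Set.mem_singleton_iff]
      have := pathGraph_leafSet (m := m) (by omega)
      have hx : (pathGraph m).degree (e.symm x) = 1 ↔
          e.symm x ∈ {y : Fin m | (pathGraph m).degree y = 1} := Iff.rfl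
      rw [hx, this]
      simp only [Set.mem_insert_iff, Set.mem_singleton_iff]
      constructor
      · rintro (h | h)
        · left; rw [← h, e.apply_symm_apply]
        · right; rw [← h, e.apply_symm_apply]
      · rintro (rfl | rfl) <;> simp
    erw [this]
    exact Set.ncard_pair (by
      intro h
      have := e.injective h
      have : (0 : ℕ) = m - 1 := congrArg Fin.val this
      omega)


lemma cycle_extend {V : Type*} {G : SimpleGraph V} {c : List V} (hnd : c.Nodup)
    (hch : c.Chain' G.Adj) (hne : c ≠ [])
    (hwrap : G.Adj (c.getLast hne) (c.head hne)) {y z : V}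
    (hyz : G.Adj y z) (hyc : y ∉ c) (hzc : z ∈ c) :
    ∃ l' : List V, l'.Nodup ∧ l'.Chain' G.Adj ∧ l'.length = c.length + 1 := by
  obtain ⟨c₁, c₂, rfl⟩ := List.append_of_mem hzc
  have hperm : ((z :: c₂) ++ c₁).Perm (c₁ ++ z :: c₂) := List.perm_append_comm
  have hnd' : ((z :: c₂) ++ c₁).Nodup := hperm.nodup_iff.mpr hnd
  have hch' : ((z :: c₂) ++ c₁).Chain' G.Adj := by
    refine List.isChain_append.mpr ?_
    refine ⟨hch.suffix ⟨c₁, rfl⟩, hch.prefix ⟨z :: c₂, rfl⟩, ?_⟩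
    intro p hp q hq
    rcases List.eq_nil_or_concat c₁ with rfl | _
    · simp at hq
    have hc₁ : c₁ ≠ [] := by rintro rfl; simp at hq
    rw [List.getLast?_eq_getLast (by simp)] at hp
    rw [List.head?_eq_head hc₁] at hq
    simp only [Option.mem_some_iff] at hp hq
    subst hp hq
    have h1 : (c₁ ++ z :: c₂).getLast hne = (z :: c₂).getLast (by simp) := by
      rw [List.getLast_append]
      simp
    have h2 : (c₁ ++ z :: c₂).head hne = c₁.head hc₁ := by
      rw [List.head_append]
      simp [hc₁]
    rw [h1, h2] at hwrap
    exact hwrap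
  refine ⟨y :: ((z :: c₂) ++ c₁), ?_, ?_, by simp; omega⟩
  · rw [List.nodup_cons]
    exact ⟨fun h => hyc (hperm.mem_iff.mp h), hnd'⟩
  · refine List.isChain_cons.mpr ?_
    refine ⟨?_, hch'⟩
    intro p hp
    simp only [List.cons_append, List.head?_cons, Option.mem_some_iff] at hp
    subst hp
    exact hyz

lemma crossover {V : Type*} {G : SimpleGraph V} {l : List V} (hnd : l.Nodup)
    (hch : l.Chain' G.Adj) (hne : l ≠ []) {i : ℕ} (hi : i + 1 < l.length)
    (ha : G.Adj (l.head hne) (l[i + 1]'hi))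
    (hb : G.Adj (l.getLast hne) (l[i]'(by omega))) :
    ∃ c : List V, c.Perm l ∧ ∃ hc : c ≠ [],
      c.Nodup ∧ c.Chain' G.Adj ∧ G.Adj (c.getLast hc) (c.head hc) := by
  set t := l.take (i + 1) with ht
  set d := l.drop (i + 1) with hd
  have hne_t : t ≠ [] := by
    rw [ht]
    simp only [ne_eq, List.take_eq_nil_iff]
    push_neg
    exact ⟨by omega, hne⟩
  have hne_d : d ≠ [] := by
    rw [hd]
    simp only [ne_eq, List.drop_eq_nil_iff]
    push_neg
    omega
  have hsplit : t ++ d = l := List.take_append_drop _ _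
  have hperm : (t.reverse ++ d).Perm l := by
    have hp := (List.reverse_perm t).append_right d
    rwa [hsplit] at hp
  refine ⟨t.reverse ++ d, hperm, by simp [hne_t], hperm.nodup_iff.mpr hnd, ?_, ?_⟩
  · refine List.isChain_append.mpr ?_
    refine ⟨List.isChain_reverse.mpr ((hch.prefix ⟨d, hsplit⟩).imp fun a b hab => hab.symm), 
      hch.suffix ⟨t, hsplit⟩, ?_⟩
    intro p hp q hq
    rw [List.getLast?_reverse, List.head?_eq_head hne_t] at hp
    rw [List.head?_drop] at hq
    simp only [Option.mem_some_iff] at hp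
    have hq' : q = l[i + 1]'hi := by
      rw [List.getElem?_eq_getElem hi] at hq
      exact (Option.mem_some_iff.mp hq).symm
    have hp' : p = l.head hne := by
      rw [← hp]; exact List.head_take hne_t
    subst hp' hq'
    exact ha
  · have hld : l.getLast hne = d.getLast hne_d := by
      have h1 : l.getLast? = d.getLast? := by
        conv_lhs => rw [← hsplit]
        rw [List.getLast?_append, List.getLast?_eq_getLast hne_d]
        rfl
      rw [List.getLast?_eq_getLast hne, List.getLast?_eq_getLast hne_d] at h1
      exact Option.some.inj h1
    have hlast : (t.reverse ++ d).getLast (by simp [hne_t]) = l.getLast hne :=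
      (List.getLast_append_of_ne_nil _ hne_d).trans hld.symm
    have hhead : (t.reverse ++ d).head (by simp [hne_t]) = l[i]'(by omega) := by
      rw [List.head_append]
      simp only [List.isEmpty_iff, List.reverse_eq_nil_iff, hne_t, dite_false]
      rw [List.head_reverse]
      have h2 := List.getLast_take (l := l) (i := i + 1) hne_t
      rw [h2]
      simp only [Nat.add_sub_cancel]
      rw [List.getElem?_eq_getElem (show i < l.length by omega)]
      rfl
    rw [hlast, hhead]
    exact hb

lemma degree_eq_card_filter_range {V : Type*} [Fintype V] (G : SimpleGraph V)
    (l : List V) (hnd : l.Nodup) (v d : V) (hsub : ∀ u, G.Adj v u → u ∈ l) :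
    G.degree v = ((Finset.range l.length).filter (fun j => G.Adj v (l.getD j d))).card := by
  classical
  rw [← SimpleGraph.card_neighborFinset_eq_degree]
  refine (Finset.card_bij (fun j _ => l.getD j d) ?_ ?_ ?_).symm
  · intro j hj
    simp only [Finset.mem_filter, Finset.mem_range] at hj
    rw [SimpleGraph.mem_neighborFinset]
    exact hj.2
  · intro j1 h1 j2 h2 heq
    simp only [Finset.mem_filter, Finset.mem_range] at h1 h2
    have heq' : l.getD j1 d = l.getD j2 d := heq
    rw [List.getD_eq_get l d ⟨j1, h1.1⟩, List.getD_eq_get l d ⟨j2, h2.1⟩] at heq'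
    rename' heq' => heq
    have := List.nodup_iff_injective_get.mp hnd heq
    exact congrArg Fin.val this
  · intro u hu
    rw [SimpleGraph.mem_neighborFinset] at hu
    have hul : u ∈ l := hsub u hu
    have hj : l.idxOf u < l.length := List.idxOf_lt_length_iff.mpr hul
    refine ⟨l.idxOf u, ?_, ?_⟩
    · simp only [Finset.mem_filter, Finset.mem_range]
      refine ⟨hj, ?_⟩
      rw [List.getD_eq_get l d ⟨_, hj⟩, List.idxOf_get]
      exact hu
    · show l.getD (l.idxOf u) d = u
      rw [List.getD_eq_get l d ⟨_, hj⟩]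
      exact List.idxOf_get hj


/-- (Ore) If `|V(G)| ≥ 3` and `deg v + deg w ≥ |V(G)| - 1` for every two non-adjacent
vertices `v, w`, then `G` has a Hamiltonian path, i.e., a spanning tree with exactly
two leaves. -/
theorem hasSpanningEndTree_two_of_ore {V : Type*} [Fintype V] (G : SimpleGraph V)
    (hcard : 3 ≤ Fintype.card V)
    (hdeg : ∀ v w : V, v ≠ w → ¬ G.Adj v w →
      Fintype.card V - 1 ≤ G.degree v + G.degree w) :
    G.HasSpanningEndTree 2 := by
  classical
  set n := Fintype.card V with hn
  have hcommon : ∀ v w : V, v ≠ w → ¬ G.Adj v w → ∃ u, G.Adj v u ∧ G.Adj w u := by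
    intro v w hne hnadj
    by_contra hc
    push_neg at hc
    have hdisj : Disjoint (G.neighborFinset v) (G.neighborFinset w) := by
      rw [Finset.disjoint_left]
      intro u hu hw
      rw [SimpleGraph.mem_neighborFinset] at hu hw
      exact hc u hu hw
    have hsub : G.neighborFinset v ∪ G.neighborFinset w ⊆ Finset.univ \ {v, w} := by
      intro u hu
      rw [Finset.mem_union] at hu
      simp only [Finset.mem_sdiff, Finset.mem_univ, true_and, Finset.mem_insert,
        Finset.mem_singleton]
      push_neg
      rcases hu with hu | hu <;> rw [SimpleGraph.mem_neighborFinset] at hu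
      · exact ⟨fun h => G.irrefl (h ▸ hu), fun h => hnadj (h ▸ hu)⟩
      · exact ⟨fun h => hnadj ((h ▸ hu).symm), fun h => G.irrefl (h ▸ hu)⟩
    have h1 := Finset.card_le_card hsub
    rw [Finset.card_union_of_disjoint hdisj, SimpleGraph.card_neighborFinset_eq_degree,
      SimpleGraph.card_neighborFinset_eq_degree] at h1
    have h2 : (Finset.univ \ {v, w} : Finset V).card = n - 2 := by
      rw [Finset.card_sdiff_of_subset (Finset.subset_univ _), Finset.card_univ]
      congr 1
      rw [Finset.card_insert_of_notMem (by simpa using hne), Finset.card_singleton]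
    have h3 := hdeg v w hne hnadj
    omega
  have hpre : G.Preconnected := by
    intro v w
    by_cases hne : v = w
    · exact hne ▸ SimpleGraph.Reachable.refl v
    · by_cases hadj : G.Adj v w
      · exact hadj.reachable
      · obtain ⟨u, h1, h2⟩ := hcommon v w hne hadj
        exact h1.reachable.trans h2.reachable.symm
  have hnon : Nonempty V := Fintype.card_pos_iff.mp (by omega)
  obtain ⟨v₀⟩ := hnon
  set P : ℕ → Prop := fun k => ∃ l : List V, l.Nodup ∧ l.Chain' G.Adj ∧ l.length = k with hP
  have hP1 : P 1 := ⟨[v₀], by simp, List.isChain_singleton _, rfl⟩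
  have hPb : ∀ j, P j → j ≤ n := by rintro j ⟨l, hl, -, rfl⟩; exact hl.length_le_card
  set k := Nat.findGreatest P n with hk
  have hPk : P k := Nat.findGreatest_spec (by omega) hP1
  have hmax : ∀ j, P j → j ≤ k := fun j hj => Nat.le_findGreatest (hPb j hj) hj
  obtain ⟨l, hnd, hch, hlen⟩ := hPk
  have hk1 : 1 ≤ k := hmax 1 hP1
  have hlne : l ≠ [] := by
    rw [← List.length_pos_iff_ne_nil]
    omega
  have hall : ∀ x, x ∈ l := by
    by_contra hx
    push_neg at hx
    obtain ⟨x, hxl⟩ := hx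
    have hkn : k + 1 ≤ n := by
      have h1 : l.toFinset.card = k := by rw [List.toFinset_card_of_nodup hnd, hlen]
      have h2 : insert x l.toFinset ⊆ Finset.univ := Finset.subset_univ _
      have h3 := Finset.card_le_card h2
      rw [Finset.card_insert_of_notMem (by simpa using hxl), h1, Finset.card_univ] at h3
      omega
    set a := l.head hlne with hadef
    set b := l.getLast hlne with hbdef
    have hal : a ∈ l := List.head_mem hlne
    have hbl : b ∈ l := List.getLast_mem hlne
    have hext1 : ∀ y, G.Adj y a → y ∈ l := by
      intro y hy
      by_contra hyl
      have hPk1 : P (k + 1) := by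
        refine ⟨y :: l, ?_, ?_, by simp [hlen]⟩
        · rw [List.nodup_cons]
          exact ⟨hyl, hnd⟩
        · refine List.isChain_cons.mpr ?_
          refine ⟨?_, hch⟩
          intro p hp
          rw [List.head?_eq_head hlne] at hp
          rw [← Option.mem_some_iff.mp hp]
          exact hy
      have := hmax _ hPk1
      omega
    have hext2 : ∀ y, G.Adj b y → y ∈ l := by
      intro y hy
      by_contra hyl
      have hPk1 : P (k + 1) := by
        refine ⟨l ++ [y], ?_, ?_, by simp [hlen]⟩
        · rw [List.nodup_append]
          refine ⟨hnd, by simp, ?_⟩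
          intro c hc c' hcy hcc'
          simp only [List.mem_singleton] at hcy
          subst hcy; subst hcc'; exact hyl hc
        · refine List.isChain_append.mpr ?_
          refine ⟨hch, by simp, ?_⟩
          intro p hp q hq
          rw [List.getLast?_eq_getLast hlne] at hp
          simp only [List.head?_cons, Option.mem_some_iff] at hp hq
          rw [← hp, ← hq]
          exact hy
      have := hmax _ hPk1
      omega
    have hxa : x ≠ a := fun h => hxl (h ▸ hal)
    rcases eq_or_lt_of_le hk1 with hk1' | hk2
    · -- k = 1
      obtain ⟨a', rfl⟩ : ∃ a', l = [a'] := List.length_eq_one_iff.mp (by omega)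
      have ha' : a = a' := rfl
      have hnadj : ¬ G.Adj a x := by
        intro h
        have : x ∈ [a'] := hext2 x (by rwa [show b = a' from rfl, ← ha'])
        simp only [List.mem_singleton] at this
        exact hxa (this.trans ha'.symm)
      have h3 := hdeg a x (Ne.symm hxa) hnadj
      have hsub2 : G.neighborFinset x ⊆ Finset.univ \ {x, a} := by
        intro u hu
        rw [SimpleGraph.mem_neighborFinset] at hu
        simp only [Finset.mem_sdiff, Finset.mem_univ, true_and, Finset.mem_insert,
          Finset.mem_singleton]
        push_neg
        exact ⟨fun h => G.irrefl (h ▸ hu), fun h => hnadj ((h ▸ hu).symm)⟩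
      have h4 := Finset.card_le_card hsub2
      rw [SimpleGraph.card_neighborFinset_eq_degree] at h4
      have h5 : (Finset.univ \ {x, a} : Finset V).card = n - 2 := by
        rw [Finset.card_sdiff_of_subset (Finset.subset_univ _), Finset.card_univ]
        congr 1
        rw [Finset.card_insert_of_notMem (by simpa using hxa), Finset.card_singleton]
      have hdega : G.degree a = 0 := by
        rw [← SimpleGraph.card_neighborFinset_eq_degree, Finset.card_eq_zero]
        ext u
        simp only [SimpleGraph.mem_neighborFinset, Finset.notMem_empty, iff_false]
        intro hu
        have hu' : u ∈ [a'] := hext1 u hu.symm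
        simp only [List.mem_singleton] at hu'
        exact G.irrefl ((hu'.trans ha'.symm) ▸ hu)
      omega
    · -- k ≥ 2
      have hab : a ≠ b := by
        intro h
        have ha0 : a = l.get ⟨0, by omega⟩ := (List.get_mk_zero (by omega)).symm
        have hbk : b = l.get ⟨l.length - 1, by omega⟩ := List.getLast_eq_getElem hlne
        rw [ha0, hbk] at h
        have := List.nodup_iff_injective_get.mp hnd h
        have h0 : (0 : ℕ) = l.length - 1 := congrArg Fin.val this
        omega
      have hcyc : ∃ c : List V, c.Perm l ∧ ∃ hc : c ≠ [],
          c.Nodup ∧ c.Chain' G.Adj ∧ G.Adj (c.getLast hc) (c.head hc) := by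
        by_cases hadj : G.Adj a b
        · exact ⟨l, List.Perm.refl l, hlne, hnd, hch, hadj.symm⟩
        · have hcount := hdeg a b hab hadj
          set f : ℕ → V := fun j => l.getD j a with hf
          have hf0 : f 0 = a := by
            rw [hf]
            simp only
            rw [List.getD_eq_get l a ⟨0, by omega⟩, List.get_mk_zero (by omega)]
          have hfk : f (k - 1) = b := by
            rw [hf]
            simp only
            rw [List.getD_eq_get l a ⟨k - 1, by rw [hlen]; omega⟩, hbdef, List.getLast_eq_getElem hlne]
            exact congrArg l.get (Fin.ext (show k - 1 = l.length - 1 by omega))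
          have hdeg_a : G.degree a =
              ((Finset.range k).filter (fun j => G.Adj a (f j))).card := by
            rw [degree_eq_card_filter_range G l hnd a a (fun u hu => hext1 u hu.symm), hlen]
          have hdeg_b : G.degree b =
              ((Finset.range k).filter (fun j => G.Adj b (f j))).card := by
            rw [degree_eq_card_filter_range G l hnd b a (fun u hu => hext2 u hu), hlen]
          set A : Finset ℕ := (Finset.range (k - 1)).filter (fun i => G.Adj a (f (i + 1)))
            with hA
          set B : Finset ℕ := (Finset.range (k - 1)).filter (fun i => G.Adj b (f i)) with hB
          have hcardA : ((Finset.range k).filter (fun j => G.Adj a (f j))).card = A.card := by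
            refine (Finset.card_bij (fun i _ => i + 1) ?_ ?_ ?_).symm
            · intro i hi
              simp only [hA, Finset.mem_filter, Finset.mem_range] at hi ⊢
              exact ⟨by omega, hi.2⟩
            · intro i1 h1 i2 h2 h
              have h' : i1 + 1 = i2 + 1 := h
              omega
            · intro j hj
              simp only [hA, Finset.mem_filter, Finset.mem_range] at hj ⊢
              have hj0 : j ≠ 0 := by
                intro h
                rw [h, hf0] at hj
                exact G.irrefl hj.2
              exact ⟨j - 1, ⟨by omega, by rw [Nat.sub_add_cancel (by omega)]; exact hj.2⟩,
                by omega⟩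
          have hcardB : ((Finset.range k).filter (fun j => G.Adj b (f j))).card = B.card := by
            congr 1
            apply Finset.Subset.antisymm
            · intro j hj
              simp only [hB, Finset.mem_filter, Finset.mem_range] at hj ⊢
              have hjk : j ≠ k - 1 := by
                intro h
                rw [h, hfk] at hj
                exact G.irrefl hj.2
              exact ⟨by omega, hj.2⟩
            · intro j hj
              simp only [hB, Finset.mem_filter, Finset.mem_range] at hj ⊢
              exact ⟨by omega, hj.2⟩
          have hAB : (A ∪ B).card ≤ k - 1 := by
            calc (A ∪ B).card ≤ (Finset.range (k - 1)).card := by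
                  apply Finset.card_le_card
                  intro j hj
                  rcases Finset.mem_union.mp hj with h | h
                  · exact Finset.mem_of_mem_filter j h
                  · exact Finset.mem_of_mem_filter j h
              _ = k - 1 := Finset.card_range _
          have hABsum : A.card + B.card = (A ∪ B).card + (A ∩ B).card :=
            (Finset.card_union_add_card_inter A B).symm
          have hABne : (A ∩ B).Nonempty := by
            rw [← Finset.card_pos]
            omega
          obtain ⟨i, hi⟩ := hABne
          rw [Finset.mem_inter] at hi
          obtain ⟨hiA, hiB⟩ := hi
          simp only [hA, hB, Finset.mem_filter, Finset.mem_range] at hiA hiB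
          have hi1 : i + 1 < l.length := by omega
          have hfa : f (i + 1) = l[i + 1]'hi1 := by
            rw [hf]
            simp only
            rw [List.getD_eq_get l a ⟨_, hi1⟩]
            rfl
          have hfb : f i = l[i]'(by omega) := by
            rw [hf]
            simp only
            rw [List.getD_eq_get l a ⟨i, by omega⟩]
            rfl
          exact crossover hnd hch hlne hi1 (hfa ▸ hiA.2) (hfb ▸ hiB.2)
      obtain ⟨c, hcperm, hcne, hcnd, hcch, hcwrap⟩ := hcyc
      have hxc : x ∉ c := fun h => hxl (hcperm.mem_iff.mp h)
      obtain ⟨w⟩ := hpre x (c.head hcne)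
      obtain ⟨y, z, hyz, hyS, hzS⟩ := crossing (S := {v | v ∉ c}) w hxc
        (by simp only [Set.mem_setOf_eq, not_not]; exact List.head_mem hcne)
      obtain ⟨l', h1, h2, h3⟩ := cycle_extend hcnd hcch hcne hcwrap hyz hyS
        (not_not.mp hzS)
      have hPc : P (c.length + 1) := ⟨l', h1, h2, h3⟩
      have h4 := hmax _ hPc
      have h5 := hcperm.length_eq
      omega
  have hlenn : 3 ≤ l.length := by
    have h1 : Finset.univ ⊆ l.toFinset := fun u _ => List.mem_toFinset.mpr (hall u)
    have h2 := Finset.card_le_card h1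
    rw [Finset.card_univ] at h2
    have h3 := List.toFinset_card_le l
    omega
  exact hamList_spanningEndTree G l hnd hall hch hlenn
end
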